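/- arXiv:1112.3205 — 8 statements merged into one kernel-verified Lean document; each statement's English description precedes it below -/
import Mathlib

section
/- For a fixed positive real number b ≠ 1 and positive integer r, the function g_b(y_1,...,y_r) = Σ_{k=1}^r Σ_{i=k}^r Π_{j=k}^i b^{-y_j} is strictly convex on ℝ^r. -/
open Finset

theorem strictConvex_g (b : ℝ) (hb : 0 < b) (hb1 : b ≠ 1) (r : ℕ) (hr : 0 < r) :
    StrictConvexOn ℝ (Set.univ : Set (Fin r → ℝ))
      (fun y : Fin r → ℝ =>
        ∑ k : Fin r, ∑ i : Fin r,
          if k ≤ i then ∏ j ∈ Finset.Icc k i, b ^ (-(y j)) else 0) := by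
  have hlog : Real.log b ≠ 0 := by
    intro h
    rcases Real.log_eq_zero.mp h with h' | h' | h' <;> simp_all <;> linarith
  have hprod : ∀ (z : Fin r → ℝ) (k i : Fin r),
      ∏ j ∈ Finset.Icc k i, b ^ (-(z j)) =
        Real.exp (∑ j ∈ Finset.Icc k i, (-(z j)) * Real.log b) := by
    intro z k i
    rw [Real.exp_sum]
    refine Finset.prod_congr rfl fun j _ => ?_
    rw [Real.rpow_def_of_pos hb]
    ring_nf
  constructor
  · exact convex_univ
  · intro x _ y _ hxy a c ha hc hac
    obtain ⟨j0, hj0⟩ := Function.ne_iff.mp hxy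
    simp only
    have hlin : ∀ (s : Finset (Fin r)),
        ∑ j ∈ s, (-((a • x + c • y) j)) * Real.log b
          = a * (∑ j ∈ s, (-(x j)) * Real.log b)
            + c * (∑ j ∈ s, (-(y j)) * Real.log b) := by
      intro s
      rw [Finset.mul_sum, Finset.mul_sum, ← Finset.sum_add_distrib]
      refine Finset.sum_congr rfl fun j _ => ?_
      simp only [Pi.add_apply, Pi.smul_apply, smul_eq_mul]
      ring
    rw [← Finset.sum_product', ← Finset.sum_product', ← Finset.sum_product',
      smul_eq_mul, smul_eq_mul, Finset.mul_sum, Finset.mul_sum, ← Finset.sum_add_distrib]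
    refine Finset.sum_lt_sum ?_ ⟨(j0, j0), Finset.mem_product.mpr ⟨mem_univ _, mem_univ _⟩, ?_⟩
    · rintro ⟨k, i⟩ -
      by_cases hki : k ≤ i
      · simp only [hki, if_true, hprod, hlin]
        exact convexOn_exp.2 (Set.mem_univ _) (Set.mem_univ _) ha.le hc.le hac
      · simp [hki]
    · simp only [le_refl, if_true, hprod, hlin]
      have hICC : Finset.Icc j0 j0 = {j0} := Finset.Icc_self j0
      rw [hICC]
      simp only [Finset.sum_singleton]
      have hne : (-(x j0)) * Real.log b ≠ (-(y j0)) * Real.log b := by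
        intro h
        exact hj0 (neg_injective (mul_right_cancel₀ hlog h))
      exact strictConvexOn_exp.2 (Set.mem_univ _) (Set.mem_univ _) hne ha hc hac
end

section
/- Let p be a prime and s ≥ 2 an integer. The minimum of h_p(a_1,a_2,a_3) = p^{-(a_2-a_1)} + p^{-(a_3-a_1)} + p^{-(a_3-a_2)} over all integers 0 ≤ a_1 < a_2 < a_3 ≤ s equals p^{-⌊s/2⌋} + p^{-s} + p^{-(s-⌊s/2⌋)}, attained only for a_1 = 0, a_3 = s, and a_2 = ⌊s/2⌋ (or additionally a_2 = ⌊s/2⌋+1 when s is odd). -/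
private lemma aux_key (q : ℝ) (hq : 1 < q) (s m d : ℤ) (hm1 : 1 ≤ m) (h2m : 2*m ≤ s)
    (h2m1 : s ≤ 2*m+1) (hd1 : 1 ≤ d) (hds : d ≤ s-1) :
    q^(-m) + q^(m-s) ≤ q^(-d) + q^(d-s) ∧
      (q^(-d) + q^(d-s) = q^(-m) + q^(m-s) → d = m ∨ d = s-m) := by
  have hq0 : (0:ℝ) < q := lt_trans one_pos hq
  have einj : ∀ a b : ℤ, q^a = q^b → a = b := by
    intro a b hab
    by_contra h
    rcases lt_or_gt_of_ne h with hlt | hlt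
    · exact absurd hab (ne_of_lt (zpow_lt_zpow_right₀ hq hlt))
    · exact absurd hab.symm (ne_of_lt (zpow_lt_zpow_right₀ hq hlt))
  set x := q^(-d) with hxdef
  set y := q^(d-s) with hydef
  set A := q^(-m) with hAdef
  set B := q^(m-s) with hBdef
  have hx : 0 < x := zpow_pos hq0 _
  have hxy : x * y = A * B := by
    rw [hxdef, hydef, hAdef, hBdef, ← zpow_add₀ (ne_of_gt hq0), ← zpow_add₀ (ne_of_gt hq0)]
    ring_nf
  have hBA : B ≤ A := zpow_le_zpow_right₀ (le_of_lt hq) (by omega)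
  have hfac : 0 ≤ (x - A) * (x - B) := by
    rcases le_or_gt d m with h | h
    · have h1 : A ≤ x := zpow_le_zpow_right₀ (le_of_lt hq) (by omega)
      nlinarith
    · have h1 : x ≤ B := zpow_le_zpow_right₀ (le_of_lt hq) (by omega)
      nlinarith
  constructor
  · nlinarith [hx, hfac, hxy]
  · intro heq
    have h0 : (x - A) * (x - B) = 0 := by linear_combination x * heq - hxy
    rcases mul_eq_zero.mp h0 with h | h
    · left
      have := einj (-d) (-m) (by rw [← hxdef, ← hAdef]; linarith [sub_eq_zero.mp h])
      omega
    · right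
      have := einj (-d) (m-s) (by rw [← hxdef, ← hBdef]; linarith [sub_eq_zero.mp h])
      omega

theorem m_p_s_three (p : ℕ) (hp : p.Prime) (s : ℕ) (hs : 2 ≤ s) :
    IsLeast {x : ℝ | ∃ a₁ a₂ a₃ : ℤ, 0 ≤ a₁ ∧ a₁ < a₂ ∧ a₂ < a₃ ∧ a₃ ≤ (s : ℤ) ∧
        x = (p : ℝ) ^ (a₁ - a₂) + (p : ℝ) ^ (a₁ - a₃) + (p : ℝ) ^ (a₂ - a₃)}
      ((p : ℝ) ^ (-((s / 2 : ℕ) : ℤ)) + (p : ℝ) ^ (-(s : ℤ)) +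
        (p : ℝ) ^ (-((s : ℤ) - ((s / 2 : ℕ) : ℤ)))) ∧
    ∀ a₁ a₂ a₃ : ℤ, 0 ≤ a₁ → a₁ < a₂ → a₂ < a₃ → a₃ ≤ (s : ℤ) →
      (p : ℝ) ^ (a₁ - a₂) + (p : ℝ) ^ (a₁ - a₃) + (p : ℝ) ^ (a₂ - a₃) =
        (p : ℝ) ^ (-((s / 2 : ℕ) : ℤ)) + (p : ℝ) ^ (-(s : ℤ)) +
          (p : ℝ) ^ (-((s : ℤ) - ((s / 2 : ℕ) : ℤ))) →
      a₁ = 0 ∧ a₃ = (s : ℤ) ∧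
        (a₂ = ((s / 2 : ℕ) : ℤ) ∨ (Odd s ∧ a₂ = ((s / 2 : ℕ) : ℤ) + 1)) := by
  set q : ℝ := (p : ℝ) with hqdef
  have hq : 1 < q := by rw [hqdef]; exact_mod_cast hp.one_lt
  have hq0 : (0:ℝ) < q := lt_trans one_pos hq
  set M : ℤ := ((s / 2 : ℕ) : ℤ) with hMdef
  have hM1 : 1 ≤ M := by
    rw [hMdef]; have : 1 ≤ s / 2 := by omega
    exact_mod_cast this
  have h2M : 2 * M ≤ (s : ℤ) := by
    rw [hMdef]; have : 2 * (s/2) ≤ s := by omega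
    exact_mod_cast this
  have h2M1 : (s : ℤ) ≤ 2 * M + 1 := by
    rw [hMdef]; have : s ≤ 2 * (s/2) + 1 := by omega
    exact_mod_cast this
  have hrw3 : q ^ (-((s : ℤ) - M)) = q ^ (M - (s : ℤ)) := by ring_nf
  -- key pointwise lower bound
  have main : ∀ a₁ a₂ a₃ : ℤ, 0 ≤ a₁ → a₁ < a₂ → a₂ < a₃ → a₃ ≤ (s : ℤ) →
      (q^(-M) + q^(-(s:ℤ)) + q^(M - (s:ℤ)) ≤ q ^ (a₁ - a₂) + q ^ (a₁ - a₃) + q ^ (a₂ - a₃)) ∧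
      (q ^ (a₁ - a₂) + q ^ (a₁ - a₃) + q ^ (a₂ - a₃) = q^(-M) + q^(-(s:ℤ)) + q^(M - (s:ℤ)) →
        a₁ = 0 ∧ a₃ = (s:ℤ) ∧ (a₂ = M ∨ a₂ = (s:ℤ) - M)) := by
    intro a₁ a₂ a₃ h0 h12 h23 h3s
    set d : ℤ := a₂ - a₁ with hddef
    set t : ℤ := a₃ - a₁ with htdef
    have e1 : a₁ - a₂ = -d := by omega
    have e2 : a₁ - a₃ = -t := by omega
    have e3 : a₂ - a₃ = d - t := by omega
    rw [e1, e2, e3]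
    have hts : t ≤ (s:ℤ) := by omega
    have hd1 : 1 ≤ d := by omega
    have hds : d ≤ (s:ℤ) - 1 := by omega
    have i1 : q^(-(s:ℤ)) ≤ q^(-t) := zpow_le_zpow_right₀ (le_of_lt hq) (by omega)
    have i2 : q^(d-(s:ℤ)) ≤ q^(d-t) := zpow_le_zpow_right₀ (le_of_lt hq) (by omega)
    obtain ⟨i3, eq3⟩ := aux_key q hq (s:ℤ) M d hM1 h2M h2M1 hd1 hds
    constructor
    · linarith
    · intro heq
      have e1' : q^(-t) = q^(-(s:ℤ)) := by linarith
      have hts' : t = (s:ℤ) := by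
        by_contra h
        have : q^(-t) < q^(-(s:ℤ)) → False := by intro hh; linarith
        have hlt : -(s:ℤ) < -t := by omega
        exact this (by linarith [zpow_lt_zpow_right₀ hq hlt])
      have ha1 : a₁ = 0 := by omega
      have ha3 : a₃ = (s:ℤ) := by omega
      refine ⟨ha1, ha3, ?_⟩
      have e2' : q^(d-t) = q^(d-(s:ℤ)) := by rw [hts']
      have heq' : q^(-d) + q^(d-(s:ℤ)) = q^(-M) + q^(M-(s:ℤ)) := by
        rw [hts'] at heq e1'
        linarith
      have := eq3 heq'
      omega
  constructor
  · constructor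
    · refine ⟨0, M, (s:ℤ), le_refl 0, by omega, by omega, le_refl _, ?_⟩
      rw [zero_sub, zero_sub, hrw3]
    · rintro x ⟨a₁, a₂, a₃, h0, h12, h23, h3s, rfl⟩
      rw [hrw3]
      exact (main a₁ a₂ a₃ h0 h12 h23 h3s).1
  · intro a₁ a₂ a₃ h0 h12 h23 h3s heq
    rw [hrw3] at heq
    obtain ⟨ha1, ha3, hcase⟩ := (main a₁ a₂ a₃ h0 h12 h23 h3s).2 heq
    refine ⟨ha1, ha3, ?_⟩
    rcases Nat.even_or_odd s with he | ho
    · left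
      obtain ⟨k, hk⟩ := he
      have : s / 2 = k := by omega
      omega
    · rcases hcase with h | h
      · left; exact h
      · right
        obtain ⟨k, hk⟩ := ho
        have : s / 2 = k := by omega
        exact ⟨⟨k, hk⟩, by omega⟩
end

section
/- For a prime p and real σ > 0, the minimum of h_p(α_1, α_2, α_3) = p^{-(α_2-α_1)} + p^{-(α_3-α_1)} + p^{-(α_3-α_2)} over real 0 ≤ α_1 ≤ α_2 ≤ α_3 ≤ σ equals p^{-σ} + 2·p^{-σ/2}, uniquely attained at α_1 = 0, α_2 = σ/2, α_3 = σ. -/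
lemma mtilde_aux (t : ℝ) (ht : 1 < t) (σ : ℝ) (hσ : 0 < σ)
    (α₁ α₂ α₃ : ℝ) (h0 : 0 ≤ α₁) (h12 : α₁ ≤ α₂) (h23 : α₂ ≤ α₃) (h3 : α₃ ≤ σ) :
    t ^ (-σ) + 2 * t ^ (-(σ / 2)) ≤ t ^ (α₁ - α₂) + t ^ (α₁ - α₃) + t ^ (α₂ - α₃) ∧
    (t ^ (α₁ - α₂) + t ^ (α₁ - α₃) + t ^ (α₂ - α₃) = t ^ (-σ) + 2 * t ^ (-(σ / 2)) →
      α₁ = 0 ∧ α₂ = σ / 2 ∧ α₃ = σ) := by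
  have ht0 : (0 : ℝ) < t := by linarith
  set s : ℝ := t ^ (-(σ / 2)) with hs_def
  set u : ℝ := t ^ (α₁ - α₂) with hu_def
  set v : ℝ := t ^ (α₂ - α₃) with hv_def
  have hs : 0 < s := Real.rpow_pos_of_pos ht0 _
  have hu : 0 < u := Real.rpow_pos_of_pos ht0 _
  have hv : 0 < v := Real.rpow_pos_of_pos ht0 _
  have hss : s * s = t ^ (-σ) := by
    rw [hs_def, ← Real.rpow_add ht0]; ring_nf
  have huv : u * v = t ^ (α₁ - α₃) := by
    rw [hu_def, hv_def, ← Real.rpow_add ht0]; ring_nf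
  have hmle : s * s ≤ u * v := by
    rw [hss, huv]
    exact (Real.rpow_le_rpow_left_iff ht).mpr (by linarith)
  have h2s : 2 * s ≤ u + v := by
    nlinarith [sq_nonneg (u - v), sq_nonneg (u + v - 2 * s)]
  constructor
  · rw [← hss, ← huv]; nlinarith
  · intro heq
    rw [← hss, ← huv] at heq
    have h1 : u * v = s * s := by nlinarith
    have h2 : u + v = 2 * s := by nlinarith
    have h3' : (u - v) ^ 2 = 0 := by nlinarith
    have huv' : u = v := by
      have := pow_eq_zero_iff (n := 2) (by norm_num) |>.mp h3'
      linarith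
    have hus : u = s := by nlinarith
    have hvs : v = s := by linarith
    have e1 : α₁ - α₂ = -(σ / 2) := by
      rw [hu_def, hs_def] at hus
      have hle := (Real.rpow_le_rpow_left_iff ht).mp hus.le
      have hge := (Real.rpow_le_rpow_left_iff ht).mp hus.ge
      linarith
    have e2 : α₂ - α₃ = -(σ / 2) := by
      rw [hv_def, hs_def] at hvs
      have hle := (Real.rpow_le_rpow_left_iff ht).mp hvs.le
      have hge := (Real.rpow_le_rpow_left_iff ht).mp hvs.ge
      linarith
    refine ⟨by linarith, by linarith, by linarith⟩

theorem mtilde_p_sigma_three (p : ℕ) (hp : p.Prime) (σ : ℝ) (hσ : 0 < σ) :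
    IsLeast {x : ℝ | ∃ α₁ α₂ α₃ : ℝ, 0 ≤ α₁ ∧ α₁ ≤ α₂ ∧ α₂ ≤ α₃ ∧ α₃ ≤ σ ∧
        x = (p : ℝ) ^ (α₁ - α₂) + (p : ℝ) ^ (α₁ - α₃) + (p : ℝ) ^ (α₂ - α₃)}
      ((p : ℝ) ^ (-σ) + 2 * (p : ℝ) ^ (-(σ / 2))) ∧
    ∀ α₁ α₂ α₃ : ℝ, 0 ≤ α₁ → α₁ ≤ α₂ → α₂ ≤ α₃ → α₃ ≤ σ →
      (p : ℝ) ^ (α₁ - α₂) + (p : ℝ) ^ (α₁ - α₃) + (p : ℝ) ^ (α₂ - α₃) =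
        (p : ℝ) ^ (-σ) + 2 * (p : ℝ) ^ (-(σ / 2)) →
      α₁ = 0 ∧ α₂ = σ / 2 ∧ α₃ = σ := by
  have hp2 : (2 : ℝ) ≤ (p : ℝ) := by exact_mod_cast hp.two_le
  have ht : (1 : ℝ) < (p : ℝ) := by linarith
  constructor
  · constructor
    · refine ⟨0, σ / 2, σ, le_refl _, by linarith, by linarith, le_refl _, ?_⟩
      rw [show (0 : ℝ) - σ / 2 = -(σ / 2) by ring, show (0 : ℝ) - σ = -σ by ring,
        show σ / 2 - σ = -(σ / 2) by ring]
      ring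
    · rintro x ⟨α₁, α₂, α₃, h0, h12, h23, h3, rfl⟩
      exact (mtilde_aux (p : ℝ) ht σ hσ α₁ α₂ α₃ h0 h12 h23 h3).1
  · intro α₁ α₂ α₃ h0 h12 h23 h3 heq
    exact (mtilde_aux (p : ℝ) ht σ hσ α₁ α₂ α₃ h0 h12 h23 h3).2 heq
end

section
/- Let r ≥ 3 be an integer, 0 < ρ ≤ 2^{-r}, let ν ∈ (0,1) be the unique solution of x^r = ρ(1-x)^2, and set μ = ν/(1-ν). Then the point (μ, ν, ..., ν, μ) ∈ (0,1)^r (with r-2 middle coordinates equal to ν) satisfies the constraint x_1·x_2···x_r = ρ, and f(μ, ν, ..., ν, μ) = (r + μ)·μ, where f(x_1,...,x_r) = Σ_{k=1}^r Σ_{i=k}^r Π_{j=k}^i x_j. -/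
open Finset

private lemma inner_step (r : ℕ) (x : ℕ → ℝ) (k : ℕ) (hk : k < r - 1) :
    (∑ i ∈ Finset.Icc k (r-1), ∏ j ∈ Finset.Icc k i, x j)
      = x k * (1 + ∑ i ∈ Finset.Icc (k+1) (r-1), ∏ j ∈ Finset.Icc (k+1) i, x j) := by
  have h1 : Finset.Icc k (r-1) = insert k (Finset.Icc (k+1) (r-1)) := by
    ext a; simp only [Finset.mem_Icc, Finset.mem_insert]; omega
  rw [h1, Finset.sum_insert (by simp)]
  have h2 : ∀ i ∈ Finset.Icc (k+1) (r-1),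
      (∏ j ∈ Finset.Icc k i, x j) = x k * ∏ j ∈ Finset.Icc (k+1) i, x j := by
    intro i hi
    simp only [Finset.mem_Icc] at hi
    have : Finset.Icc k i = insert k (Finset.Icc (k+1) i) := by
      ext a; simp only [Finset.mem_Icc, Finset.mem_insert]; omega
    rw [this, Finset.prod_insert (by simp)]
  rw [Finset.sum_congr rfl h2, ← Finset.mul_sum, Finset.Icc_self, Finset.prod_singleton]
  ring

theorem critical_point_eval (r : ℕ) (hr : 3 ≤ r) (ρ ν : ℝ)
    (hρ0 : 0 < ρ) (hρ1 : ρ ≤ (1 / 2) ^ r)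
    (hν : ν ∈ Set.Ioo (0 : ℝ) 1) (hνeq : ν ^ r = ρ * (1 - ν) ^ 2) :
    (∀ j : Fin r,
        (if j.val = 0 ∨ j.val = r - 1 then ν / (1 - ν) else ν) ∈ Set.Ioo (0 : ℝ) 1) ∧
    (∏ j : Fin r, (if j.val = 0 ∨ j.val = r - 1 then ν / (1 - ν) else ν)) = ρ ∧
    (∑ k : Fin r, ∑ i : Fin r,
        if k ≤ i then
          ∏ j ∈ Finset.Icc k i, (if j.val = 0 ∨ j.val = r - 1 then ν / (1 - ν) else ν)
        else 0) = ((r : ℝ) + ν / (1 - ν)) * (ν / (1 - ν)) := by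
  obtain ⟨hν0, hν1⟩ := hν
  have h1ν : (0:ℝ) < 1 - ν := by linarith
  have h1ν' : (1:ℝ) - ν ≠ 0 := ne_of_gt h1ν
  set μ : ℝ := ν / (1 - ν) with hμ
  have hμ0 : 0 < μ := div_pos hν0 h1ν
  have hνhalf : ν < 1 / 2 := by
    have hsq : (1 - ν) ^ 2 < 1 := by nlinarith
    have hlt : ν ^ r < (1/2 : ℝ) ^ r := by
      calc ν ^ r = ρ * (1 - ν)^2 := hνeq
        _ < ρ * 1 := by exact mul_lt_mul_of_pos_left hsq hρ0
        _ = ρ := by ring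
        _ ≤ (1/2)^r := hρ1
    exact lt_of_pow_lt_pow_left₀ r (by norm_num) hlt
  have hμ1 : μ < 1 := by
    rw [hμ, div_lt_one h1ν]; linarith
  have hνμ : ν * (1 + μ) = μ := by
    rw [hμ]; field_simp; ring
  set x : ℕ → ℝ := fun j => if j = 0 ∨ j = r - 1 then μ else ν with hx
  have hx0 : x 0 = μ := by simp [hx]
  have hxr : x (r-1) = μ := by simp [hx]
  have hxmid : ∀ j, 1 ≤ j → j < r - 1 → x j = ν := by
    intro j h1 h2; simp only [hx]; rw [if_neg]; omega
  refine ⟨?_, ?_, ?_⟩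
  · intro j
    by_cases h : j.val = 0 ∨ j.val = r - 1 <;> simp only [h, if_true, if_false]
    · exact ⟨hμ0, hμ1⟩
    · exact ⟨hν0, hν1⟩
  · -- product
    have hprodfin : (∏ j : Fin r, (if j.val = 0 ∨ j.val = r - 1 then μ else ν))
        = ∏ j ∈ Finset.range r, x j := Fin.prod_univ_eq_prod_range (fun j => x j) r
    rw [hprodfin]
    have hset : Finset.range r = insert 0 (insert (r-1) (Finset.Ico 1 (r-1))) := by
      ext a; simp only [Finset.mem_range, Finset.mem_insert, Finset.mem_Ico]; omega
    rw [hset, Finset.prod_insert (by simp; omega), Finset.prod_insert (by simp)]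
    have hmid : ∀ j ∈ Finset.Ico 1 (r-1), x j = ν := by
      intro j hj; simp only [Finset.mem_Ico] at hj; exact hxmid j hj.1 hj.2
    rw [Finset.prod_congr rfl hmid, Finset.prod_const, Nat.card_Ico]
    rw [hx0, hxr, hμ]
    have hpow : ν * ν * ν ^ (r - 1 - 1) = ν ^ r := by
      rw [show ν * ν = ν ^ 2 by ring, ← pow_add]
      congr 1; omega
    field_simp
    nlinarith [hνeq, hpow]
  · -- sum
    have hterm : ∀ k i : Fin r,
        (if k ≤ i then
            ∏ j ∈ Finset.Icc k i, (if j.val = 0 ∨ j.val = r - 1 then μ else ν)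
          else 0)
        = (if k.val ≤ i.val then ∏ j ∈ Finset.Icc k.val i.val, x j else 0) := by
      intro k i
      by_cases h : (k:ℕ) ≤ (i:ℕ)
      · rw [if_pos (Fin.le_def.mpr h), if_pos h, ← Fin.map_valEmbedding_Icc,
          Finset.prod_map]
        rfl
      · rw [if_neg (fun hc => h (Fin.le_def.mp hc)), if_neg h]
    have hconv : (∑ k : Fin r, ∑ i : Fin r,
        if k ≤ i then
          ∏ j ∈ Finset.Icc k i, (if j.val = 0 ∨ j.val = r - 1 then μ else ν) else 0)
        = ∑ k ∈ Finset.range r, ∑ i ∈ Finset.range r,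
            if k ≤ i then ∏ j ∈ Finset.Icc k i, x j else 0 := by
      rw [← Fin.sum_univ_eq_sum_range (fun k => ∑ i ∈ Finset.range r,
            if k ≤ i then ∏ j ∈ Finset.Icc k i, x j else 0) r]
      apply Finset.sum_congr rfl
      intro k _
      rw [← Fin.sum_univ_eq_sum_range (fun i => if k.val ≤ i then
            ∏ j ∈ Finset.Icc k.val i, x j else 0) r]
      exact Finset.sum_congr rfl fun i _ => hterm k i
    rw [hconv]
    have hinner : ∀ k ∈ Finset.range r,
        (∑ i ∈ Finset.range r, if k ≤ i then ∏ j ∈ Finset.Icc k i, x j else 0)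
          = ∑ i ∈ Finset.Icc k (r-1), ∏ j ∈ Finset.Icc k i, x j := by
      intro k hk
      rw [Finset.mem_range] at hk
      rw [← Finset.sum_filter]
      apply Finset.sum_congr
      · ext a
        simp only [Finset.mem_filter, Finset.mem_range, Finset.mem_Icc]
        omega
      · intro i _; rfl
    rw [Finset.sum_congr rfl hinner]
    have key : ∀ d k, 1 ≤ k → k + d = r - 1 →
        (∑ i ∈ Finset.Icc k (r-1), ∏ j ∈ Finset.Icc k i, x j) = μ := by
      intro d
      induction d with
      | zero =>
        intro k hk1 hk2
        have : k = r - 1 := by omega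
        subst this
        simp only [Finset.Icc_self, Finset.sum_singleton, Finset.prod_singleton]
        exact hxr
      | succ d ih =>
        intro k hk1 hk2
        have hklt : k < r - 1 := by omega
        rw [inner_step r x k hklt, ih (k+1) (by omega) (by omega), hxmid k hk1 hklt]
        exact hνμ
    have hA0 : (∑ i ∈ Finset.Icc 0 (r-1), ∏ j ∈ Finset.Icc 0 i, x j) = μ * (1 + μ) := by
      rw [inner_step r x 0 (by omega), hx0, key (r - 2) 1 (by omega) (by omega)]
    have hset : Finset.range r = insert 0 (Finset.Ico 1 r) := by
      ext a; simp only [Finset.mem_range, Finset.mem_insert, Finset.mem_Ico]; omega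
    rw [hset, Finset.sum_insert (by simp), hA0]
    have hmid : ∀ k ∈ Finset.Ico 1 r,
        (∑ i ∈ Finset.Icc k (r-1), ∏ j ∈ Finset.Icc k i, x j) = μ := by
      intro k hk
      rw [Finset.mem_Ico] at hk
      exact key (r - 1 - k) k hk.1 (by omega)
    rw [Finset.sum_congr rfl hmid, Finset.sum_const, Nat.card_Ico, nsmul_eq_mul]
    have : ((r - 1 : ℕ) : ℝ) = (r : ℝ) - 1 := by
      rw [Nat.cast_sub (by omega)]; norm_num
    rw [this]
    ring
end

section
/- Let r ≥ 1 be an integer and 0 < ρ ≤ 2^{-r}. Then min { f(x_1,...,x_r) : (x_1,...,x_r) ∈ [0,1]^r, x_1·x_2···x_r = ρ } = (r + μ)·μ, where μ = ν/(1-ν) and ν is the unique solution in (0,1) of x^r = ρ(1-x)^2; moreover the minimizer is unique. -/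
open Finset

noncomputable section AuxMinF

/-- candidate minimizer, ℕ-indexed -/
def astF (r : ℕ) (ν : ℝ) : ℕ → ℝ := fun j =>
  ν * ((if j = 0 then (1 - ν)⁻¹ else 1) * (if j = r - 1 then (1 - ν)⁻¹ else 1))

def PPF (X : ℕ → ℝ) (k i : ℕ) : ℝ := ∏ j ∈ Finset.Icc k i, X j

def TTF (r : ℕ) : Finset (ℕ × ℕ) := (Finset.range r ×ˢ Finset.range r).filter fun p => p.1 ≤ p.2

def FFF (r : ℕ) (X : ℕ → ℝ) : ℝ := ∑ p ∈ TTF r, PPF X p.1 p.2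

variable {r : ℕ} {ν c : ℝ}

lemma sumGeom (hc : c * (1 - ν) = 1) (n : ℕ) :
    (∑ k ∈ range n, ν ^ k) = c * (1 - ν ^ n) := by
  induction n with
  | zero => simp
  | succ n ih =>
    rw [Finset.sum_range_succ, ih]
    linear_combination (-(ν ^ n)) * hc

lemma sumA (hc : c * (1 - ν) = 1) (j : ℕ) :
    (∑ k ∈ range (j + 1), ν ^ (j - k) * (if k = 0 then c else 1)) = c := by
  have h1 : ∀ k ∈ range (j + 1), ν ^ (j - k) * (if k = 0 then c else 1)
      = ν ^ (j - k) + (if k = 0 then (c - 1) * ν ^ j else 0) := by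
    intro k hk
    split_ifs with h
    · subst h; simp; ring
    · ring
  rw [Finset.sum_congr rfl h1, Finset.sum_add_distrib, Finset.sum_ite_eq' (range (j+1)) 0]
  have h2 : (∑ k ∈ range (j + 1), ν ^ (j - k)) = ∑ k ∈ range (j + 1), ν ^ k := by
    rw [← Finset.sum_range_reflect]
    exact Finset.sum_congr rfl fun k hk => by rw [Finset.mem_range] at hk; congr 1; omega
  rw [h2, sumGeom hc, if_pos (by simp)]
  linear_combination (ν ^ j) * hc

lemma sumB (hc : c * (1 - ν) = 1) {n : ℕ} (hn : 1 ≤ n) :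
    (∑ m ∈ range n, ν ^ (m + 1) * (if m = n - 1 then c else 1)) = ν * c := by
  have h1 : ∀ m ∈ range n, ν ^ (m + 1) * (if m = n - 1 then c else 1)
      = ν ^ (m + 1) + (if m = n - 1 then (c - 1) * ν ^ (m + 1) else 0) := by
    intro m hm
    split_ifs with h
    · ring
    · ring
  rw [Finset.sum_congr rfl h1, Finset.sum_add_distrib, Finset.sum_ite_eq' (range n) (n-1)]
  have h3 : ∀ m ∈ range n, ν ^ (m + 1) = ν ^ m * ν := fun m _ => pow_succ ν m
  rw [Finset.sum_congr rfl h3, ← Finset.sum_mul, sumGeom hc, if_pos (by simp; omega)]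
  have h4 : n - 1 + 1 = n := by omega
  rw [h4]
  linear_combination (ν ^ n) * hc

lemma astF_pos (hν0 : 0 < ν) (h1ν : 0 < 1 - ν) (j : ℕ) : 0 < astF r ν j := by
  unfold astF
  have hc0 : 0 < (1 - ν)⁻¹ := inv_pos.2 h1ν
  positivity

lemma PPF_ast (hc : c = (1 - ν)⁻¹) {k i : ℕ} (hki : k ≤ i) (hir : i < r) :
    PPF (astF r ν) k i
      = ν ^ (i - k + 1) * ((if k = 0 then c else 1) * (if i = r - 1 then c else 1)) := by
  unfold PPF astF
  rw [Finset.prod_mul_distrib, Finset.prod_mul_distrib, Finset.prod_const,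
    Finset.prod_ite_eq' (Finset.Icc k i) 0 (fun _ => (1-ν)⁻¹),
    Finset.prod_ite_eq' (Finset.Icc k i) (r-1) (fun _ => (1-ν)⁻¹),
    Nat.card_Icc]
  have h0 : (0 ∈ Finset.Icc k i) ↔ (k = 0) := by rw [Finset.mem_Icc]; omega
  have h1 : (r - 1 ∈ Finset.Icc k i) ↔ (i = r - 1) := by rw [Finset.mem_Icc]; omega
  have h2 : i + 1 - k = i - k + 1 := by omega
  rw [h2, hc]
  congr 1
  · congr 1
    · simp only [h0]
    · simp only [h1]

lemma minf_inner_sum (hc : c = (1 - ν)⁻¹) (hcc : c * (1 - ν) = 1) {k : ℕ} (hk : k < r) :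
    (∑ i ∈ range r, if k ≤ i then ν ^ (i - k + 1) * (if i = r - 1 then c else 1) else 0)
      = ν * c := by
  rw [← Finset.sum_filter]
  have hfi : (range r).filter (fun i => k ≤ i) = Finset.Ico k r := by
    ext m; simp [Finset.mem_filter, Finset.mem_range, Finset.mem_Ico]; omega
  rw [hfi, Finset.sum_Ico_eq_sum_range]
  have h1 : ∀ m ∈ range (r - k), ν ^ (k + m - k + 1) * (if k + m = r - 1 then c else 1)
      = ν ^ (m + 1) * (if m = r - k - 1 then c else 1) := by
    intro m hm
    rw [Finset.mem_range] at hm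
    have e1 : k + m - k = m := by omega
    have e2 : (k + m = r - 1) ↔ (m = r - k - 1) := by omega
    rw [e1]
    simp only [e2]
  rw [Finset.sum_congr rfl h1, sumB hcc (by omega)]

lemma left_sum (hcc : c * (1 - ν) = 1) {j : ℕ} (hj : j < r) :
    (∑ k ∈ range r, if k ≤ j then ν ^ (j - k) * (if k = 0 then c else 1) else 0) = c := by
  rw [← Finset.sum_filter]
  have hfi : (range r).filter (fun k => k ≤ j) = range (j + 1) := by
    ext m; simp [Finset.mem_filter, Finset.mem_range]; omega
  rw [hfi, sumA hcc]

/-- Sum over the pair set as a double sum. -/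
lemma FFF_eq (r : ℕ) (X : ℕ → ℝ) :
    FFF r X = ∑ k ∈ range r, ∑ i ∈ range r, if k ≤ i then PPF X k i else 0 := by
  unfold FFF TTF
  rw [Finset.sum_filter, Finset.sum_product]

lemma sum_TTF (r : ℕ) (g : ℕ × ℕ → ℝ) :
    (∑ p ∈ TTF r, g p) = ∑ k ∈ range r, ∑ i ∈ range r, if k ≤ i then g (k, i) else 0 := by
  unfold TTF
  rw [Finset.sum_filter, Finset.sum_product]

/-- total value of f at the candidate point -/
lemma FFF_ast (hc : c = (1 - ν)⁻¹) (hcc : c * (1 - ν) = 1) (hr : 1 ≤ r) :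
    FFF r (astF r ν) = ν * c * ((r : ℝ) - 1 + c) := by
  rw [FFF_eq]
  have h1 : ∀ k ∈ range r, (∑ i ∈ range r, if k ≤ i then PPF (astF r ν) k i else 0)
      = (if k = 0 then c else 1) * (ν * c) := by
    intro k hk
    rw [Finset.mem_range] at hk
    have h2 : ∀ i ∈ range r, (if k ≤ i then PPF (astF r ν) k i else 0)
        = (if k = 0 then c else 1) *
          (if k ≤ i then ν ^ (i - k + 1) * (if i = r - 1 then c else 1) else 0) := by
      intro i hi
      rw [Finset.mem_range] at hi
      by_cases hki : k ≤ i
      · rw [if_pos hki, if_pos hki, PPF_ast hc hki hi]; ring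
      · rw [if_neg hki, if_neg hki, mul_zero]
    rw [Finset.sum_congr rfl h2, ← Finset.mul_sum, minf_inner_sum hc hcc hk]
  rw [Finset.sum_congr rfl h1, ← Finset.sum_mul]
  have h3 : (∑ k ∈ range r, (if k = 0 then c else 1)) = (r : ℝ) - 1 + c := by
    have h4 : ∀ k ∈ range r, (if k = 0 then c else 1)
        = 1 + (if k = 0 then c - 1 else 0) := by
      intro k _; split_ifs <;> ring
    rw [Finset.sum_congr rfl h4, Finset.sum_add_distrib, Finset.sum_const,
      Finset.sum_ite_eq' (range r) 0, if_pos (by simp; omega), Finset.card_range]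
    simp; ring
  rw [h3]; ring

/-- marginal sums -/
lemma marginal (hc : c = (1 - ν)⁻¹) (hcc : c * (1 - ν) = 1) {j : ℕ} (hj : j < r) :
    (∑ p ∈ TTF r, if p.1 ≤ j ∧ j ≤ p.2 then PPF (astF r ν) p.1 p.2 else 0)
      = ν * c ^ 2 := by
  rw [sum_TTF]
  have h1 : ∀ k ∈ range r, ∀ i ∈ range r,
      (if k ≤ i then (if k ≤ j ∧ j ≤ i then PPF (astF r ν) k i else 0) else 0)
      = (if k ≤ j then ν ^ (j - k) * (if k = 0 then c else 1) else 0) *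
        (if j ≤ i then ν ^ (i - j + 1) * (if i = r - 1 then c else 1) else 0) := by
    intro k hk i hi
    rw [Finset.mem_range] at hk hi
    by_cases h2 : k ≤ j ∧ j ≤ i
    · have hki : k ≤ i := le_trans h2.1 h2.2
      rw [if_pos hki, if_pos h2, if_pos h2.1, if_pos h2.2, PPF_ast hc hki hi]
      have he : ν ^ (j - k) * ν ^ (i - j + 1) = ν ^ (i - k + 1) := by
        rw [← pow_add]; congr 1; omega
      calc ν ^ (i - k + 1) * ((if k = 0 then c else 1) * (if i = r - 1 then c else 1))
          = (ν ^ (j - k) * ν ^ (i - j + 1)) *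
            ((if k = 0 then c else 1) * (if i = r - 1 then c else 1)) := by rw [he]
        _ = _ := by ring
    · rcases not_and_or.mp h2 with h3 | h3
      · rw [if_neg h3, zero_mul]
        by_cases hki : k ≤ i
        · rw [if_pos hki, if_neg h2]
        · rw [if_neg hki]
      · rw [if_neg h3, mul_zero]
        by_cases hki : k ≤ i
        · rw [if_pos hki, if_neg h2]
        · rw [if_neg hki]
  have h5 : (∑ k ∈ range r, ∑ i ∈ range r,
      (if k ≤ i then (if k ≤ j ∧ j ≤ i then PPF (astF r ν) k i else 0) else 0))
      = (∑ k ∈ range r, if k ≤ j then ν ^ (j - k) * (if k = 0 then c else 1) else 0) *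
        (∑ i ∈ range r, if j ≤ i then ν ^ (i - j + 1) * (if i = r - 1 then c else 1) else 0) := by
    rw [Finset.sum_mul_sum]
    exact Finset.sum_congr rfl fun k hk => Finset.sum_congr rfl fun i hi => h1 k hk i hi
  rw [h5, left_sum hcc hj]
  have h6 : (∑ i ∈ range r, if j ≤ i then ν ^ (i - j + 1) * (if i = r - 1 then c else 1) else 0)
      = ν * c := minf_inner_sum hc hcc hj
  rw [h6]; ring

lemma PPF_pos {X : ℕ → ℝ} (hX : ∀ j, j < r → 0 < X j) {k i : ℕ} (hi : i < r) :
    0 < PPF X k i := by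
  unfold PPF
  apply Finset.prod_pos
  intro j hj
  rw [Finset.mem_Icc] at hj
  exact hX j (by omega)

lemma PPF_nonneg {X : ℕ → ℝ} (hX : ∀ j, j < r → 0 ≤ X j) {k i : ℕ} (hi : i < r) :
    0 ≤ PPF X k i := by
  unfold PPF
  apply Finset.prod_nonneg
  intro j hj
  rw [Finset.mem_Icc] at hj
  exact hX j (by omega)

/-- key product–swap computation -/
lemma key_prod {Y : ℕ → ℝ} (hY : ∀ j, j < r → 0 < Y j) (w : ℕ × ℕ → ℝ) {E : ℝ}
    (hmarg : ∀ j, j < r →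
      (∑ p ∈ TTF r, if p.1 ≤ j ∧ j ≤ p.2 then w p else 0) = E) :
    (∏ p ∈ TTF r, (PPF Y p.1 p.2) ^ (w p)) = (∏ j ∈ range r, Y j) ^ E := by
  have hmem : ∀ p ∈ TTF r, p.1 ≤ p.2 ∧ p.2 < r := by
    intro p hp
    unfold TTF at hp
    simp only [Finset.mem_filter, Finset.mem_product, Finset.mem_range] at hp
    exact ⟨hp.2, hp.1.2⟩
  have step1 : ∀ p ∈ TTF r, (PPF Y p.1 p.2) ^ (w p)
      = ∏ j ∈ range r, (if p.1 ≤ j ∧ j ≤ p.2 then (Y j) ^ (w p) else 1) := by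
    intro p hp
    obtain ⟨hp1, hp2⟩ := hmem p hp
    have hicc : Finset.Icc p.1 p.2 = (range r).filter (fun j => p.1 ≤ j ∧ j ≤ p.2) := by
      ext m; simp only [Finset.mem_Icc, Finset.mem_filter, Finset.mem_range]; omega
    unfold PPF
    rw [← Real.finset_prod_rpow _ _ (fun j hj => by
        rw [Finset.mem_Icc] at hj; exact (hY j (by omega)).le) (w p),
      hicc, Finset.prod_filter]
  rw [Finset.prod_congr rfl step1, Finset.prod_comm]
  have step2 : ∀ j ∈ range r,
      (∏ p ∈ TTF r, if p.1 ≤ j ∧ j ≤ p.2 then (Y j) ^ (w p) else 1)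
      = (Y j) ^ E := by
    intro j hj
    rw [Finset.mem_range] at hj
    have h1 : ∀ p ∈ TTF r, (if p.1 ≤ j ∧ j ≤ p.2 then (Y j) ^ (w p) else 1)
        = (Y j) ^ (if p.1 ≤ j ∧ j ≤ p.2 then w p else 0) := by
      intro p _
      split_ifs
      · rfl
      · rw [Real.rpow_zero]
    rw [Finset.prod_congr rfl h1, ← Real.rpow_sum_of_pos (hY j hj), hmarg j hj]
  rw [Finset.prod_congr rfl step2,
    Real.finset_prod_rpow _ _ (fun j hj => (hY j (Finset.mem_range.mp hj)).le) E]

lemma sqrt_fin_prod {α : Type*} {s : Finset α} {f : α → ℝ} (h : ∀ i ∈ s, 0 ≤ f i) :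
    Real.sqrt (∏ i ∈ s, f i) = ∏ i ∈ s, Real.sqrt (f i) := by
  induction s using Finset.cons_induction with
  | empty => simp
  | cons a s ha ih =>
    rw [Finset.prod_cons, Finset.prod_cons,
      Real.sqrt_mul (h a (Finset.mem_cons_self a s)),
      ih (fun i hi => h i (Finset.mem_cons_of_mem hi))]

lemma ast_prod {ρ : ℝ} (h1ν : 1 - ν ≠ 0) (hr : 1 ≤ r)
    (hνeq : ν ^ r = ρ * (1 - ν) ^ 2) :
    (∏ j ∈ range r, astF r ν j) = ρ := by
  unfold astF
  rw [Finset.prod_mul_distrib, Finset.prod_mul_distrib, Finset.prod_const,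
    Finset.card_range,
    Finset.prod_ite_eq' (range r) 0 (fun _ => (1 - ν)⁻¹),
    Finset.prod_ite_eq' (range r) (r - 1) (fun _ => (1 - ν)⁻¹),
    if_pos (by simp; omega), if_pos (by simp; omega), hνeq]
  have h3 : (1 - ν) * (1 - ν)⁻¹ = 1 := mul_inv_cancel₀ h1ν
  calc ρ * (1 - ν) ^ 2 * ((1 - ν)⁻¹ * (1 - ν)⁻¹)
      = ρ * (((1 - ν) * (1 - ν)⁻¹) * ((1 - ν) * (1 - ν)⁻¹)) := by ring
    _ = ρ := by rw [h3]; ring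

lemma ast_le_one {ρ : ℝ} (hν0 : 0 < ν) (hhalf : ν < 1 / 2) (hr : 1 ≤ r)
    (hνeq : ν ^ r = ρ * (1 - ν) ^ 2) (hρ1 : ρ ≤ (1 / 2) ^ r) {j : ℕ} (hj : j < r) :
    astF r ν j ≤ 1 := by
  have h1ν : 0 < 1 - ν := by linarith
  have hinv : ν * (1 - ν)⁻¹ ≤ 1 := by
    rw [mul_inv_le_iff₀ h1ν]; linarith
  unfold astF
  by_cases h0 : j = 0 <;> by_cases h1 : j = r - 1
  · -- r = 1 case
    have hr1 : r = 1 := by omega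
    have key : ν * ((1 - ν)⁻¹ * (1 - ν)⁻¹) ≤ 1 := by
      have h2 : ν * ((1 - ν)⁻¹ * (1 - ν)⁻¹) = ρ := by
        rw [hr1, pow_one] at hνeq
        have h3 : (1 - ν) * (1 - ν)⁻¹ = 1 := mul_inv_cancel₀ h1ν.ne'
        calc ν * ((1 - ν)⁻¹ * (1 - ν)⁻¹)
            = ρ * (1 - ν) ^ 2 * ((1 - ν)⁻¹ * (1 - ν)⁻¹) := by rw [← hνeq]
          _ = ρ * (((1 - ν) * (1 - ν)⁻¹) * ((1 - ν) * (1 - ν)⁻¹)) := by ring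
          _ = ρ := by rw [h3]; ring
      rw [h2]
      calc ρ ≤ (1 / 2 : ℝ) ^ r := hρ1
        _ ≤ 1 := pow_le_one₀ (by norm_num) (by norm_num)
    rw [if_pos h0, if_pos h1]
    exact key
  · rw [if_pos h0, if_neg h1, mul_one]
    exact hinv
  · rw [if_neg h0, if_pos h1, one_mul]
    exact hinv
  · rw [if_neg h0, if_neg h1, mul_one, mul_one]
    linarith

/-- main lower bound -/
lemma lower_bound (hc : c = (1 - ν)⁻¹) (h1ν : 0 < 1 - ν) (hν0 : 0 < ν) (hr : 1 ≤ r)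
    {ρ : ℝ} (hρ0 : 0 < ρ) (hast : (∏ j ∈ range r, astF r ν j) = ρ)
    {X : ℕ → ℝ} (hX0 : ∀ j, j < r → 0 ≤ X j)
    (hprod : (∏ j ∈ range r, X j) = ρ) :
    ν * c * ((r : ℝ) - 1 + c) ≤ FFF r X := by
  have hcc : c * (1 - ν) = 1 := by rw [hc]; field_simp
  have hc0 : 0 < c := by rw [hc]; positivity
  have hXpos : ∀ j, j < r → 0 < X j := by
    intro j hj
    rcases (hX0 j hj).lt_or_eq with h | h
    · exact h
    · exfalso
      have : (∏ j ∈ range r, X j) = 0 :=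
        Finset.prod_eq_zero (Finset.mem_range.mpr hj) h.symm
      rw [hprod] at this; linarith
  have hFt : 0 < ν * c * ((r : ℝ) - 1 + c) := by
    have : (1 : ℝ) ≤ (r : ℝ) := by exact_mod_cast hr
    have : 0 < (r : ℝ) - 1 + c := by linarith
    positivity
  have hastpos : ∀ j, j < r → 0 < astF r ν j := fun j _ => astF_pos hν0 h1ν j
  have hPPpos : ∀ p ∈ TTF r, 0 < PPF (astF r ν) p.1 p.2 := by
    intro p hp
    unfold TTF at hp
    simp only [Finset.mem_filter, Finset.mem_product, Finset.mem_range] at hp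
    exact PPF_pos hastpos hp.1.2
  have hPXnn : ∀ p ∈ TTF r, 0 ≤ PPF X p.1 p.2 := by
    intro p hp
    unfold TTF at hp
    simp only [Finset.mem_filter, Finset.mem_product, Finset.mem_range] at hp
    exact PPF_nonneg hX0 hp.1.2
  set Ft := ν * c * ((r : ℝ) - 1 + c) with hFtdef
  set w : ℕ × ℕ → ℝ := fun p => PPF (astF r ν) p.1 p.2 / Ft with hwdef
  set z : ℕ × ℕ → ℝ := fun p => PPF X p.1 p.2 / PPF (astF r ν) p.1 p.2 with hzdef
  have hw : ∀ p ∈ TTF r, 0 ≤ w p := fun p hp => div_nonneg (hPPpos p hp).le hFt.le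
  have hw' : (∑ p ∈ TTF r, w p) = 1 := by
    rw [hwdef, ← Finset.sum_div]
    have : (∑ p ∈ TTF r, PPF (astF r ν) p.1 p.2) = Ft := FFF_ast hc hcc hr
    rw [this, div_self hFt.ne']
  have hz : ∀ p ∈ TTF r, 0 ≤ z p := fun p hp =>
    div_nonneg (hPXnn p hp) (hPPpos p hp).le
  have hmarg : ∀ j, j < r →
      (∑ p ∈ TTF r, if p.1 ≤ j ∧ j ≤ p.2 then w p else 0) = ν * c ^ 2 / Ft := by
    intro j hj
    have h1 : ∀ p ∈ TTF r, (if p.1 ≤ j ∧ j ≤ p.2 then w p else 0)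
        = (if p.1 ≤ j ∧ j ≤ p.2 then PPF (astF r ν) p.1 p.2 else 0) / Ft := by
      intro p _
      split_ifs
      · rfl
      · rw [zero_div]
    rw [Finset.sum_congr rfl h1, ← Finset.sum_div, marginal hc hcc hj]
  have hamgm := Real.geom_mean_le_arith_mean_weighted (TTF r) w z hw hw' hz
  have hrhs : (∑ p ∈ TTF r, w p * z p) = FFF r X / Ft := by
    unfold FFF
    rw [Finset.sum_div]
    apply Finset.sum_congr rfl
    intro p hp
    have hP : PPF (astF r ν) p.1 p.2 ≠ 0 := (hPPpos p hp).ne'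
    calc w p * z p
        = PPF X p.1 p.2 * (PPF (astF r ν) p.1 p.2 / PPF (astF r ν) p.1 p.2) / Ft := by
          rw [hwdef, hzdef]; ring
      _ = PPF X p.1 p.2 / Ft := by rw [div_self hP, mul_one]
  have hlhs : (∏ p ∈ TTF r, z p ^ w p) = 1 := by
    have h1 : ∀ p ∈ TTF r, z p ^ w p
        = (PPF X p.1 p.2) ^ w p / (PPF (astF r ν) p.1 p.2) ^ w p := by
      intro p hp
      rw [hzdef]
      exact Real.div_rpow (hPXnn p hp) (hPPpos p hp).le _
    rw [Finset.prod_congr rfl h1, Finset.prod_div_distrib,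
      key_prod hXpos w hmarg, key_prod hastpos w hmarg, hprod, hast]
    exact div_self (Real.rpow_pos_of_pos hρ0 _).ne'
  rw [hrhs, hlhs] at hamgm
  calc Ft = Ft * 1 := by ring
    _ ≤ Ft * (FFF r X / Ft) := by
        apply mul_le_mul_of_nonneg_left hamgm hFt.le
    _ = FFF r X := by field_simp

lemma sqrt_amgm {a b : ℝ} (ha : 0 ≤ a) (hb : 0 ≤ b) :
    Real.sqrt (a * b) ≤ (a + b) / 2 := by
  have h1 : a * b ≤ ((a + b) / 2) ^ 2 := by nlinarith [sq_nonneg (a - b)]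
  calc Real.sqrt (a * b) ≤ Real.sqrt (((a + b) / 2) ^ 2) := Real.sqrt_le_sqrt h1
    _ = (a + b) / 2 := Real.sqrt_sq (by linarith)

lemma mem_TTF {r : ℕ} {p : ℕ × ℕ} :
    p ∈ TTF r ↔ p.1 ≤ p.2 ∧ p.2 < r := by
  unfold TTF
  simp only [Finset.mem_filter, Finset.mem_product, Finset.mem_range]
  omega

/-- equality forces the candidate point -/
lemma eq_case (hc : c = (1 - ν)⁻¹) (h1ν : 0 < 1 - ν) (hν0 : 0 < ν) (hr : 1 ≤ r)
    {ρ : ℝ} (hρ0 : 0 < ρ) (hast : (∏ j ∈ range r, astF r ν j) = ρ)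
    (hast1 : ∀ j, j < r → astF r ν j ≤ 1)
    {X : ℕ → ℝ} (hX0 : ∀ j, j < r → 0 ≤ X j) (hX1 : ∀ j, j < r → X j ≤ 1)
    (hprod : (∏ j ∈ range r, X j) = ρ)
    (hFX : FFF r X = ν * c * ((r : ℝ) - 1 + c)) :
    ∀ j, j < r → X j = astF r ν j := by
  have hcc : c * (1 - ν) = 1 := by rw [hc]; field_simp
  have hastpos : ∀ j, j < r → 0 < astF r ν j := fun j _ => astF_pos hν0 h1ν j
  set G : ℕ → ℝ := fun n => Real.sqrt (X n * astF r ν n) with hGdef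
  have hG0 : ∀ j, j < r → 0 ≤ G j := fun j _ => Real.sqrt_nonneg _
  have hGprod : (∏ j ∈ range r, G j) = ρ := by
    have h1 : (∏ j ∈ range r, G j)
        = Real.sqrt (∏ j ∈ range r, (X j * astF r ν j)) := by
      rw [sqrt_fin_prod (fun j hj => mul_nonneg (hX0 j (Finset.mem_range.mp hj))
        (hastpos j (Finset.mem_range.mp hj)).le)]
    rw [h1, Finset.prod_mul_distrib, hprod, hast, Real.sqrt_mul_self hρ0.le]
  have hlbG := lower_bound hc h1ν hν0 hr hρ0 hast hG0 hGprod
  have hPG : ∀ p ∈ TTF r, PPF G p.1 p.2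
      = Real.sqrt (PPF X p.1 p.2 * PPF (astF r ν) p.1 p.2) := by
    intro p hp
    obtain ⟨hp1, hp2⟩ := mem_TTF.mp hp
    unfold PPF
    rw [← Finset.prod_mul_distrib, sqrt_fin_prod (fun j hj => by
      rw [Finset.mem_Icc] at hj
      exact mul_nonneg (hX0 j (by omega)) (hastpos j (by omega)).le)]
  have hterm : ∀ p ∈ TTF r,
      0 ≤ (PPF X p.1 p.2 + PPF (astF r ν) p.1 p.2) / 2 - PPF G p.1 p.2 := by
    intro p hp
    obtain ⟨hp1, hp2⟩ := mem_TTF.mp hp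
    rw [hPG p hp, sub_nonneg]
    exact sqrt_amgm (PPF_nonneg hX0 hp2) (PPF_nonneg (fun j hj => (hastpos j hj).le) hp2)
  have hsumval : (∑ p ∈ TTF r,
      ((PPF X p.1 p.2 + PPF (astF r ν) p.1 p.2) / 2 - PPF G p.1 p.2))
      = (FFF r X + FFF r (astF r ν)) / 2 - FFF r G := by
    rw [Finset.sum_sub_distrib, ← Finset.sum_div, Finset.sum_add_distrib]
    rfl
  have hsumle : (∑ p ∈ TTF r,
      ((PPF X p.1 p.2 + PPF (astF r ν) p.1 p.2) / 2 - PPF G p.1 p.2)) ≤ 0 := by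
    rw [hsumval, hFX, FFF_ast hc hcc hr]
    linarith
  have hsumzero : (∑ p ∈ TTF r,
      ((PPF X p.1 p.2 + PPF (astF r ν) p.1 p.2) / 2 - PPF G p.1 p.2)) = 0 :=
    le_antisymm hsumle (Finset.sum_nonneg hterm)
  have hzero := (Finset.sum_eq_zero_iff_of_nonneg hterm).mp hsumzero
  intro j hj
  have hmem : ((j, j) : ℕ × ℕ) ∈ TTF r := mem_TTF.mpr ⟨le_refl j, hj⟩
  have h5 := hzero ((j, j) : ℕ × ℕ) hmem
  have hPP : PPF X j j = X j := by unfold PPF; rw [Finset.Icc_self, Finset.prod_singleton]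
  have hPPa : PPF (astF r ν) j j = astF r ν j := by
    unfold PPF; rw [Finset.Icc_self, Finset.prod_singleton]
  rw [hPG _ hmem] at h5
  simp only [hPP, hPPa] at h5
  have hs : Real.sqrt (X j * astF r ν j) ^ 2 = X j * astF r ν j :=
    Real.sq_sqrt (mul_nonneg (hX0 j hj) (hastpos j hj).le)
  have h6 : Real.sqrt (X j * astF r ν j) = (X j + astF r ν j) / 2 := by linarith
  have h7 : (X j - astF r ν j) ^ 2 = 0 := by
    rw [h6] at hs
    nlinarith
  have := pow_eq_zero_iff (n := 2) (by norm_num) |>.mp h7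
  linarith [this]

def extF (r : ℕ) (x : Fin r → ℝ) : ℕ → ℝ := fun n => if h : n < r then x ⟨n, h⟩ else 1

lemma sum_fin {r : ℕ} (g : Fin r → ℝ) :
    (∑ k : Fin r, g k) = ∑ k ∈ range r, (if h : k < r then g ⟨k, h⟩ else 0) := by
  rw [← Fin.sum_univ_eq_sum_range (fun n => if h : n < r then g ⟨n, h⟩ else 0) r]
  apply Finset.sum_congr rfl
  intro i _
  rw [dif_pos i.isLt]

lemma bridge_prod {r : ℕ} (x : Fin r → ℝ) :
    (∏ j, x j) = ∏ j ∈ range r, extF r x j := by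
  rw [← Fin.prod_univ_eq_prod_range (extF r x) r]
  apply Finset.prod_congr rfl
  intro i _
  unfold extF
  rw [dif_pos i.isLt]

lemma bridge_icc {r : ℕ} (x : Fin r → ℝ) (a b : Fin r) :
    (∏ j ∈ Finset.Icc a b, x j) = PPF (extF r x) a.val b.val := by
  unfold PPF
  rw [← Fin.map_valEmbedding_Icc, Finset.prod_map]
  apply Finset.prod_congr rfl
  intro i _
  unfold extF
  simp [Fin.valEmbedding]

lemma bridge_sum {r : ℕ} (x : Fin r → ℝ) :
    (∑ k : Fin r, ∑ i : Fin r, if k ≤ i then ∏ j ∈ Finset.Icc k i, x j else 0)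
      = FFF r (extF r x) := by
  rw [FFF_eq, sum_fin]
  apply Finset.sum_congr rfl
  intro k hk
  rw [Finset.mem_range] at hk
  rw [dif_pos hk, sum_fin]
  apply Finset.sum_congr rfl
  intro i hi
  rw [Finset.mem_range] at hi
  rw [dif_pos hi]
  by_cases hki : k ≤ i
  · rw [if_pos (show (⟨k, hk⟩ : Fin r) ≤ ⟨i, hi⟩ from hki), if_pos hki, bridge_icc]
  · rw [if_neg (show ¬((⟨k, hk⟩ : Fin r) ≤ ⟨i, hi⟩) from hki), if_neg hki]

end AuxMinF


theorem constrained_min_f (r : ℕ) (hr : 1 ≤ r) (ρ ν : ℝ)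
    (hρ0 : 0 < ρ) (hρ1 : ρ ≤ (1 / 2) ^ r)
    (hν : ν ∈ Set.Ioo (0 : ℝ) 1) (hνeq : ν ^ r = ρ * (1 - ν) ^ 2) :
    IsLeast {y : ℝ | ∃ x : Fin r → ℝ, (∀ j, x j ∈ Set.Icc (0 : ℝ) 1) ∧
        (∏ j, x j) = ρ ∧
        y = ∑ k : Fin r, ∑ i : Fin r, if k ≤ i then ∏ j ∈ Finset.Icc k i, x j else 0}
      (((r : ℝ) + ν / (1 - ν)) * (ν / (1 - ν))) ∧
    (∃! x : Fin r → ℝ, (∀ j, x j ∈ Set.Icc (0 : ℝ) 1) ∧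
        (∏ j, x j) = ρ ∧
        (∑ k : Fin r, ∑ i : Fin r, if k ≤ i then ∏ j ∈ Finset.Icc k i, x j else 0) =
          ((r : ℝ) + ν / (1 - ν)) * (ν / (1 - ν))) := by
  obtain ⟨hν0, hν1⟩ := hν
  have h1ν : 0 < 1 - ν := by linarith
  have hhalf : ν < 1 / 2 := by
    by_contra h
    push_neg at h
    have h1 : (1 / 2 : ℝ) ^ r ≤ ν ^ r := pow_le_pow_left₀ (by norm_num) h r
    have h2 : (1 - ν) ^ 2 ≤ (1 / 2 : ℝ) ^ 2 := pow_le_pow_left₀ (by linarith) (by linarith) 2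
    have h3 : ρ * (1 - ν) ^ 2 ≤ ρ * (1 / 2 : ℝ) ^ 2 := mul_le_mul_of_nonneg_left h2 hρ0.le
    have h4 : ν ^ r < ρ := by nlinarith
    have h5 : ρ ≤ ν ^ r := le_trans hρ1 h1
    linarith
  set c : ℝ := (1 - ν)⁻¹ with hc
  have hcc : c * (1 - ν) = 1 := by rw [hc]; field_simp
  have hc0 : 0 < c := by rw [hc]; positivity
  have hμ : ν / (1 - ν) = ν * c := by rw [hc, div_eq_mul_inv]
  have hval : ((r : ℝ) + ν / (1 - ν)) * (ν / (1 - ν)) = ν * c * ((r : ℝ) - 1 + c) := by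
    rw [hμ]
    linear_combination (-(ν * c)) * hcc
  have hast : (∏ j ∈ range r, astF r ν j) = ρ := ast_prod h1ν.ne' hr hνeq
  have hast1 : ∀ j, j < r → astF r ν j ≤ 1 := fun j hj =>
    ast_le_one hν0 hhalf hr hνeq hρ1 hj
  have hastpos : ∀ j, j < r → 0 < astF r ν j := fun j _ => astF_pos hν0 h1ν j
  set xstar : Fin r → ℝ := fun j => astF r ν j.val with hxs
  have hext : ∀ j, j < r → extF r xstar j = astF r ν j := by
    intro j hj
    unfold extF
    rw [dif_pos hj]
  have hFcong : FFF r (extF r xstar) = FFF r (astF r ν) := by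
    unfold FFF PPF
    apply Finset.sum_congr rfl
    intro p hp
    obtain ⟨hp1, hp2⟩ := mem_TTF.mp hp
    apply Finset.prod_congr rfl
    intro j hj
    rw [Finset.mem_Icc] at hj
    exact hext j (by omega)
  have hpcong : (∏ j ∈ range r, extF r xstar j) = ∏ j ∈ range r, astF r ν j :=
    Finset.prod_congr rfl fun j hj => hext j (Finset.mem_range.mp hj)
  have hxsIcc : ∀ j : Fin r, xstar j ∈ Set.Icc (0 : ℝ) 1 := fun j =>
    ⟨(hastpos j.val j.isLt).le, hast1 j.val j.isLt⟩
  have hxsprod : (∏ j, xstar j) = ρ := by rw [bridge_prod, hpcong, hast]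
  have hxsval : (∑ k : Fin r, ∑ i : Fin r,
      if k ≤ i then ∏ j ∈ Finset.Icc k i, xstar j else 0)
      = ((r : ℝ) + ν / (1 - ν)) * (ν / (1 - ν)) := by
    rw [bridge_sum, hFcong, FFF_ast hc hcc hr]
    exact hval.symm
  constructor
  · constructor
    · exact ⟨xstar, hxsIcc, hxsprod, hxsval.symm⟩
    · rintro y ⟨x, hx1, hx2, rfl⟩
      rw [bridge_sum, hval]
      apply lower_bound hc h1ν hν0 hr hρ0 hast
      · intro j hj
        unfold extF
        rw [dif_pos hj]
        exact (hx1 _).1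
      · rw [← bridge_prod]
        exact hx2
  · refine ⟨xstar, ⟨hxsIcc, hxsprod, hxsval⟩, ?_⟩
    rintro x ⟨hx1, hx2, hx3⟩
    have hFX : FFF r (extF r x) = ν * c * ((r : ℝ) - 1 + c) := by
      rw [← bridge_sum, hx3, hval]
    have hX0 : ∀ j, j < r → 0 ≤ extF r x j := by
      intro j hj
      unfold extF
      rw [dif_pos hj]
      exact (hx1 _).1
    have hX1 : ∀ j, j < r → extF r x j ≤ 1 := by
      intro j hj
      unfold extF
      rw [dif_pos hj]
      exact (hx1 _).2
    have hXprod : (∏ j ∈ range r, extF r x j) = ρ := by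
      rw [← bridge_prod]
      exact hx2
    have heq := eq_case hc h1ν hν0 hr hρ0 hast hast1 hX0 hX1 hXprod hFX
    funext j
    have h1 : extF r x j.val = x j := by
      unfold extF
      rw [dif_pos j.isLt]
    have h2 := heq j.val j.isLt
    rw [h1] at h2
    rw [h2, hxs]
end

section
/- Let p be a prime, r ≥ 2 an integer and σ ≥ (r-1)·log 2 / log p a real number. Let ν ∈ (0,1) be the unique solution of p^σ·x^{r-1} = (1-x)², and μ = ν/(1-ν). Then the minimum of h_p(α_1,...,α_r) over real 0 ≤ α_1 ≤ ... ≤ α_r ≤ σ equals (r - 1 + μ)·μ. -/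
open Finset

lemma sum_ite_lt (n : ℕ) (g : ℕ → ℕ → ℝ) :
    (∑ k : Fin n, ∑ i : Fin n, if k < i then g k i else 0) =
    ∑ i ∈ Finset.range n, ∑ k ∈ Finset.range i, g k i := by
  have h1 : (∑ k : Fin n, ∑ i : Fin n, if k < i then g k i else 0)
      = ∑ k ∈ Finset.range n, ∑ i ∈ Finset.range n, if k < i then g k i else 0 := by
    rw [← Fin.sum_univ_eq_sum_range (fun k => ∑ i ∈ Finset.range n, if k < i then g k i else 0)]
    refine Finset.sum_congr rfl fun k _ => ?_
    rw [← Fin.sum_univ_eq_sum_range (fun i => if (k : ℕ) < i then g k i else 0)]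
    refine Finset.sum_congr rfl fun i _ => ?_
    simp only [Fin.lt_def]
  rw [h1, Finset.sum_comm]
  refine Finset.sum_congr rfl fun i hi => ?_
  rw [← Finset.sum_filter]
  refine Finset.sum_congr ?_ fun _ _ => rfl
  ext k
  simp only [Finset.mem_filter, Finset.mem_range] at *
  omega

lemma sum_tri_comm (n : ℕ) (g : ℕ → ℕ → ℝ) :
    ∑ i ∈ Finset.range n, ∑ k ∈ Finset.range i, g k i
    = ∑ k ∈ Finset.range n, ∑ i ∈ Finset.Ico (k+1) n, g k i := by
  have h1 : ∑ i ∈ Finset.range n, ∑ k ∈ Finset.range i, g k i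
      = ∑ i ∈ Finset.range n, ∑ k ∈ Finset.range n, if k < i then g k i else 0 := by
    refine Finset.sum_congr rfl fun i hi => ?_
    rw [← Finset.sum_filter]
    refine Finset.sum_congr ?_ fun _ _ => rfl
    ext k
    simp only [Finset.mem_filter, Finset.mem_range] at *
    omega
  rw [h1, Finset.sum_comm]
  refine Finset.sum_congr rfl fun k hk => ?_
  rw [← Finset.sum_filter]
  refine Finset.sum_congr ?_ fun _ _ => rfl
  ext i
  simp only [Finset.mem_filter, Finset.mem_range, Finset.mem_Ico] at *
  omega

set_option maxHeartbeats 1000000 in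
theorem mtilde_formula (p : ℕ) (hp : p.Prime) (r : ℕ) (hr : 2 ≤ r)
    (σ : ℝ) (hσ : ((r : ℝ) - 1) * Real.log 2 / Real.log p ≤ σ)
    (ν : ℝ) (hν : ν ∈ Set.Ioo (0 : ℝ) 1)
    (hνeq : (p : ℝ) ^ σ * ν ^ (r - 1) = (1 - ν) ^ 2) :
    IsLeast {y : ℝ | ∃ α : Fin r → ℝ, Monotone α ∧ (∀ i, α i ∈ Set.Icc 0 σ) ∧
        y = ∑ k : Fin r, ∑ i : Fin r, if k < i then (p : ℝ) ^ (α k - α i) else 0}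
      (((r : ℝ) - 1 + ν / (1 - ν)) * (ν / (1 - ν))) := by
  obtain ⟨hν0, hν1⟩ := hν
  obtain ⟨r', rfl⟩ : ∃ r', r = r' + 2 := ⟨r - 2, by omega⟩
  rw [show r' + 2 - 1 = r' + 1 by omega] at hνeq
  have hp1 : (1:ℝ) < p := by exact_mod_cast hp.one_lt
  have hp0 : (0:ℝ) < p := by linarith
  have hL : 0 < Real.log p := Real.log_pos hp1
  have h1ν : (0:ℝ) < 1 - ν := by linarith
  set μ : ℝ := ν / (1 - ν) with hμdef
  have hμ0 : 0 < μ := div_pos hν0 h1ν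
  have hσ0 : 0 < σ := by
    refine lt_of_lt_of_le ?_ hσ
    apply div_pos (mul_pos ?_ (Real.log_pos one_lt_two)) hL
    push_cast; linarith
  have h2r : (2:ℝ)^(r'+1) ≤ (p:ℝ)^σ := by
    have h1 : (p:ℝ)^(((r' + 2 : ℕ) - 1 : ℝ) * Real.log 2 / Real.log p) ≤ (p:ℝ)^σ :=
      (Real.rpow_le_rpow_left_iff hp1).mpr hσ
    refine le_trans (le_of_eq ?_) h1
    rw [Real.rpow_def_of_pos hp0, mul_comm, div_mul_cancel₀ _ (ne_of_gt hL),
      show ((r' + 2 : ℕ) - 1 : ℝ) = ((r'+1 : ℕ) : ℝ) by push_cast; ring,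
      ← Real.log_pow, Real.exp_log (by positivity)]
  have hνhalf : ν < 1/2 := by
    by_contra hcon
    push_neg at hcon
    have hge : (1:ℝ) ≤ (2*ν)^(r'+1) := one_le_pow₀ (by linarith : (1:ℝ) ≤ 2*ν)
    have h2 : (2:ℝ)^(r'+1) * ν^(r'+1) ≤ (p:ℝ)^σ * ν^(r'+1) := by
      gcongr
    rw [mul_pow] at hge
    nlinarith [hνeq]
  have hμ1 : μ < 1 := by rw [hμdef, div_lt_one h1ν]; linarith
  have hμν : ν * (μ + 1) = μ := by rw [hμdef]; field_simp; ring
  set b : ℕ → ℝ := fun m =>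
    if m = 0 then 1 else if m = r'+1 then ν^(r'+1)/(1-ν)^2 else μ*ν^(m-1) with hbdef
  have hb0 : b 0 = 1 := by simp [hbdef]
  have hbpos : ∀ m, 0 < b m := by
    intro m; rw [hbdef]; dsimp only; split_ifs <;> positivity
  have hblast : b (r'+1) = ν^(r'+1)/(1-ν)^2 := by simp [hbdef]
  have hbI : ∀ m, 1 ≤ m → m ≤ r' → b m = μ * ν^(m-1) := by
    intro m h1 h2; rw [hbdef]; dsimp only; rw [if_neg (by omega), if_neg (by omega)]
  have hpσ : (0:ℝ) < (p:ℝ)^σ := Real.rpow_pos_of_pos hp0 σ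
  have hblastσ : b (r'+1) = (p:ℝ)^(-σ) := by
    rw [hblast, Real.rpow_neg hp0.le]
    rw [inv_eq_one_div, div_eq_div_iff (by positivity) (ne_of_gt hpσ)]
    linarith [hνeq]
  have hrat_in : ∀ m, 1 ≤ m → m + 1 ≤ r' → b (m+1) = ν * b m := by
    intro m h1 h2
    rw [hbI _ h1 (by omega), hbI _ (by omega) h2]
    obtain ⟨m', rfl⟩ : ∃ m', m = m'+1 := ⟨m-1, by omega⟩
    simp [pow_succ]; ring
  have hrat1 : 1 ≤ r' → b 1 = μ * b 0 := by
    intro h; rw [hbI 1 le_rfl h, hb0]; simp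
  have hratlast : 1 ≤ r' → b (r'+1) = μ * b r' := by
    intro h; rw [hblast, hbI r' h le_rfl]
    obtain ⟨s, rfl⟩ : ∃ s, r' = s+1 := ⟨r'-1, by omega⟩
    rw [hμdef, Nat.add_sub_cancel]; field_simp; ring
  set B : ℕ → ℝ := fun m => ∑ k ∈ Finset.range m, b m / b k with hBdef
  set F : ℕ → ℝ := fun m => ∑ i ∈ Finset.Ico (m+1) (r'+2), b i / b m with hFdef
  have hB0 : B 0 = 0 := by simp [hBdef]
  have hFlast : F (r'+1) = 0 := by simp [hFdef]
  have hBint : ∀ m, 1 ≤ m → m ≤ r' → B m = μ := by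
    intro m hm
    induction m, hm using Nat.le_induction with
    | base =>
      intro h1
      rw [hBdef]; dsimp only
      rw [Finset.sum_range_one, hbI 1 le_rfl h1, hb0]
      simp
    | succ n hn ih =>
      intro h
      have ihn := ih (by omega)
      have hr : b (n+1) = ν * b n := hrat_in n hn h
      rw [hBdef]; dsimp only
      rw [Finset.sum_range_succ]
      have he : ∀ k ∈ Finset.range n, b (n+1) / b k = ν * (b n / b k) := by
        intro k _; rw [hr]; ring
      rw [Finset.sum_congr rfl he, ← Finset.mul_sum]
      rw [hBdef] at ihn; dsimp only at ihn
      rw [ihn, hr, mul_div_assoc, div_self (ne_of_gt (hbpos n))]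
      rw [hμdef]; field_simp; ring
  have hBlast : B (r'+1) = μ * (1 + μ) := by
    rcases Nat.eq_zero_or_pos r' with h0 | h1
    · subst h0
      rw [hBdef]; dsimp only
      rw [Finset.sum_range_one, hb0, hblast, div_one, pow_one]
      rw [hμdef]; field_simp; ring
    · have hr : b (r'+1) = μ * b r' := hratlast h1
      have hB := hBint r' h1 le_rfl
      rw [hBdef]; dsimp only
      rw [Finset.sum_range_succ]
      have he : ∀ k ∈ Finset.range r', b (r'+1) / b k = μ * (b r' / b k) := by
        intro k _; rw [hr]; ring
      rw [Finset.sum_congr rfl he, ← Finset.mul_sum]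
      rw [hBdef] at hB; dsimp only at hB
      rw [hB, hr, mul_div_assoc, div_self (ne_of_gt (hbpos r'))]
      ring
  have hFint : ∀ d m, 1 ≤ m → m ≤ r' → r' - m = d → F m = μ := by
    intro d
    induction d with
    | zero =>
      intro m h1 h2 hd
      have hmr : m = r' := by omega
      subst hmr
      rw [hFdef]; dsimp only
      rw [show m + 2 = m + 1 + 1 from rfl, Nat.Ico_succ_singleton, Finset.sum_singleton,
        hratlast (by omega), mul_div_assoc, div_self (ne_of_gt (hbpos m)), mul_one]
    | succ d ih =>
      intro m h1 h2 hd
      have hm1 : m + 1 ≤ r' := by omega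
      have hr : b (m+1) = ν * b m := hrat_in m h1 hm1
      have ihm := ih (m+1) (by omega) hm1 (by omega)
      rw [hFdef]; dsimp only
      rw [Finset.sum_eq_sum_Ico_succ_bot (by omega)]
      have he : ∀ i ∈ Finset.Ico (m+1+1) (r'+2), b i / b m = ν * (b i / b (m+1)) := by
        intro i _
        rw [hr]
        field_simp
      rw [Finset.sum_congr rfl he, ← Finset.mul_sum]
      rw [hFdef] at ihm; dsimp only at ihm
      rw [ihm, hr, mul_div_assoc, div_self (ne_of_gt (hbpos m))]
      rw [hμdef]; field_simp; ring
  have hF0 : F 0 = μ * (1 + μ) := by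
    rcases Nat.eq_zero_or_pos r' with h0 | h1
    · subst h0
      rw [hFdef]; dsimp only
      norm_num
      rw [hb0, hblast, div_one, pow_one]
      rw [hμdef]; field_simp; ring
    · have hr : b 1 = μ * b 0 := hrat1 h1
      have hF := hFint (r'-1) 1 le_rfl h1 (by omega)
      rw [hFdef]; dsimp only
      rw [Finset.sum_eq_sum_Ico_succ_bot (by omega)]
      have he : ∀ i ∈ Finset.Ico (0+1+1) (r'+2), b i / b 0 = μ * (b i / b 1) := by
        intro i _
        rw [hr, hb0]
        field_simp
      rw [Finset.sum_congr rfl he, ← Finset.mul_sum]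
      rw [hFdef] at hF; dsimp only at hF
      rw [hF, hr, hb0, mul_one]
      ring
  have hSsum : ∑ m ∈ Finset.range (r'+2), B m = (((r'+2:ℕ):ℝ) - 1 + μ) * μ := by
    rw [Finset.sum_range_succ, Finset.sum_range_succ']
    have he : ∀ j ∈ Finset.range r', B (j+1) = μ := by
      intro j hj
      rw [Finset.mem_range] at hj
      exact hBint (j+1) (by omega) (by omega)
    rw [Finset.sum_congr rfl he, Finset.sum_const, hB0, hBlast, Finset.card_range,
      nsmul_eq_mul]
    push_cast
    ring
  set A : ℕ → ℝ := fun m => -Real.log (b m) / Real.log p with hAdef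
  have hA0 : A 0 = 0 := by rw [hAdef]; dsimp only; rw [hb0, Real.log_one]; simp
  have hAlast : A (r'+1) = σ := by
    rw [hAdef]; dsimp only; rw [hblastσ, Real.log_rpow hp0]; field_simp
  have hpowA : ∀ k i : ℕ, (p:ℝ)^(A k - A i) = b i / b k := by
    intro k i
    rw [Real.rpow_def_of_pos hp0]
    have h1 : Real.log p * (A k - A i) = Real.log (b i / b k) := by
      rw [Real.log_div (ne_of_gt (hbpos i)) (ne_of_gt (hbpos k)), hAdef]
      dsimp only
      field_simp
      ring
    rw [h1, Real.exp_log (div_pos (hbpos i) (hbpos k))]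
  have hbstep : ∀ m, m + 1 ≤ r' + 1 → b (m+1) ≤ b m := by
    intro m hm
    rcases Nat.eq_zero_or_pos m with rfl | hm1
    · rcases Nat.eq_zero_or_pos r' with h0 | h1
      · rw [hb0, show (0:ℕ)+1 = r'+1 by omega, hblastσ]
        exact Real.rpow_le_one_of_one_le_of_nonpos hp1.le (by linarith)
      · rw [hrat1 h1, hb0, mul_one]; linarith
    · rcases Nat.lt_or_ge m r' with hlt | hge
      · rw [hrat_in m hm1 (by omega)]
        exact (mul_le_mul_of_nonneg_right hν1.le (hbpos m).le).trans_eq (one_mul _)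
      · have hmr : m = r' := by omega
        rw [hmr, hratlast (by omega)]
        exact (mul_le_mul_of_nonneg_right hμ1.le (hbpos r').le).trans_eq (one_mul _)
  have hbanti : ∀ n, n ≤ r'+1 → ∀ m, m ≤ n → b n ≤ b m := by
    intro n
    induction n with
    | zero =>
      intro _ m hm
      have : m = 0 := by omega
      subst this; exact le_rfl
    | succ n ih =>
      intro hn m hm
      rcases Nat.lt_or_ge m (n+1) with h | h
      · exact le_trans (hbstep n hn) (ih (by omega) m (by omega))
      · have : m = n+1 := by omega
        subst this; exact le_rfl
  have hAmono : ∀ m n, m ≤ n → n ≤ r'+1 → A m ≤ A n := by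
    intro m n hmn hn
    rw [hAdef]; dsimp only
    have hlog : Real.log (b n) ≤ Real.log (b m) :=
      Real.log_le_log (hbpos n) (hbanti n hn m hmn)
    rw [div_le_div_iff₀ hL hL]
    nlinarith [hlog, hL]
  constructor
  · refine ⟨fun i => A i.val, ?_, ?_, ?_⟩
    · intro i j hij
      exact hAmono i.val j.val hij (Nat.lt_succ_iff.mp j.isLt)
    · intro i
      constructor
      · rw [← hA0]
        exact hAmono 0 i.val (Nat.zero_le _) (Nat.lt_succ_iff.mp i.isLt)
      · rw [← hAlast]
        exact hAmono i.val (r'+1) (Nat.lt_succ_iff.mp i.isLt) le_rfl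
    · rw [show (∑ k : Fin (r'+2), ∑ i : Fin (r'+2), if k < i then (p:ℝ)^(A k.val - A i.val) else 0)
          = ∑ i ∈ Finset.range (r'+2), ∑ k ∈ Finset.range i, (p:ℝ)^(A k - A i)
        from sum_ite_lt (r'+2) (fun a b => (p:ℝ)^(A a - A b))]
      rw [Finset.sum_congr rfl (fun i (_ : i ∈ Finset.range (r'+2)) =>
        (Finset.sum_congr rfl (fun k _ => hpowA k i) :
          ∑ k ∈ Finset.range i, (p:ℝ)^(A k - A i) = ∑ k ∈ Finset.range i, b i / b k))]
      rw [show (∑ i ∈ Finset.range (r'+2), ∑ k ∈ Finset.range i, b i / b k)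
          = ∑ m ∈ Finset.range (r'+2), B m from Finset.sum_congr rfl (fun i _ => by rw [hBdef])]
      rw [hSsum]
  · rintro y ⟨α, hmono, hrange, rfl⟩
    set A2 : ℕ → ℝ := fun m => if h : m < r'+2 then α ⟨m, h⟩ else 0 with hA2def
    have hA2 : ∀ (i : Fin (r'+2)), α i = A2 i.val := by
      intro i; rw [hA2def]; dsimp only; rw [dif_pos i.isLt]
    have hconv : (∑ k : Fin (r'+2), ∑ i : Fin (r'+2), if k < i then (p:ℝ)^(α k - α i) else 0)
        = ∑ i ∈ Finset.range (r'+2), ∑ k ∈ Finset.range i, (p:ℝ)^(A2 k - A2 i) := by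
      rw [← sum_ite_lt (r'+2) (fun a b => (p:ℝ)^(A2 a - A2 b))]
      refine Finset.sum_congr rfl fun k _ => Finset.sum_congr rfl fun i _ => ?_
      rw [hA2 k, hA2 i]
    set w : ℕ → ℝ := fun m => Real.log p * A2 m + Real.log (b m) with hwdef
    have hkey : ∀ i k : ℕ, (b i / b k) * (1 + (w k - w i)) ≤ (p:ℝ)^(A2 k - A2 i) := by
      intro i k
      rw [Real.rpow_def_of_pos hp0]
      have e1 : Real.log p * (A2 k - A2 i) = Real.log (b i / b k) + (w k - w i) := by
        rw [Real.log_div (ne_of_gt (hbpos i)) (ne_of_gt (hbpos k)), hwdef]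
        dsimp only
        ring
      rw [e1, Real.exp_add, Real.exp_log (div_pos (hbpos i) (hbpos k))]
      have h2 := Real.add_one_le_exp (w k - w i)
      have hbb : 0 < b i / b k := div_pos (hbpos i) (hbpos k)
      have := mul_le_mul_of_nonneg_left (by linarith : 1 + (w k - w i) ≤ Real.exp (w k - w i)) hbb.le
      linarith [this]
    have hstep1 : ∑ i ∈ Finset.range (r'+2), ∑ k ∈ Finset.range i, ((b i / b k) * (1 + (w k - w i)))
        ≤ ∑ i ∈ Finset.range (r'+2), ∑ k ∈ Finset.range i, (p:ℝ)^(A2 k - A2 i) :=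
      Finset.sum_le_sum (fun i _ => Finset.sum_le_sum (fun k _ => hkey i k))
    have hsplit : ∑ i ∈ Finset.range (r'+2), ∑ k ∈ Finset.range i, ((b i / b k) * (1 + (w k - w i)))
        = (∑ i ∈ Finset.range (r'+2), ∑ k ∈ Finset.range i, b i / b k)
          + ((∑ i ∈ Finset.range (r'+2), ∑ k ∈ Finset.range i, (b i / b k) * w k)
            - (∑ i ∈ Finset.range (r'+2), ∑ k ∈ Finset.range i, (b i / b k) * w i)) := by
      simp_rw [show ∀ i k : ℕ, (b i / b k) * (1 + (w k - w i))
          = b i / b k + ((b i / b k) * w k - (b i / b k) * w i) from fun i k => by ring,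
        Finset.sum_add_distrib, Finset.sum_sub_distrib]
    have hT1 : (∑ i ∈ Finset.range (r'+2), ∑ k ∈ Finset.range i, (b i / b k) * w k)
        = ∑ m ∈ Finset.range (r'+2), F m * w m := by
      rw [sum_tri_comm (r'+2) (fun k i => (b i / b k) * w k)]
      refine Finset.sum_congr rfl fun k _ => ?_
      rw [hFdef]; dsimp only
      rw [Finset.sum_mul]
    have hT2 : (∑ i ∈ Finset.range (r'+2), ∑ k ∈ Finset.range i, (b i / b k) * w i)
        = ∑ m ∈ Finset.range (r'+2), B m * w m := by
      refine Finset.sum_congr rfl fun i _ => ?_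
      rw [hBdef]; dsimp only
      rw [Finset.sum_mul]
    have hTT : (∑ m ∈ Finset.range (r'+2), F m * w m) - (∑ m ∈ Finset.range (r'+2), B m * w m)
        = μ*(1+μ)*(w 0) - μ*(1+μ)*(w (r'+1)) := by
      rw [← Finset.sum_sub_distrib]
      rw [Finset.sum_range_succ, Finset.sum_range_succ']
      have hmid : ∀ j ∈ Finset.range r', F (j+1) * w (j+1) - B (j+1) * w (j+1) = 0 := by
        intro j hj
        rw [Finset.mem_range] at hj
        rw [hFint (r' - (j+1)) (j+1) (by omega) (by omega) rfl,
          hBint (j+1) (by omega) (by omega)]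
        ring
      rw [Finset.sum_congr rfl hmid, Finset.sum_const, hF0, hB0, hFlast, hBlast]
      simp
      ring
    have hw0 : 0 ≤ w 0 := by
      have h0 : A2 0 = α ⟨0, by omega⟩ := by simp [hA2def]
      have hα0 := (hrange ⟨0, by omega⟩).1
      rw [hwdef]; dsimp only
      rw [hb0, Real.log_one, add_zero, h0]
      exact mul_nonneg hL.le hα0
    have hwlast : w (r'+1) ≤ 0 := by
      have h0 : A2 (r'+1) = α ⟨r'+1, by omega⟩ := by simp [hA2def]
      have hαl := (hrange ⟨r'+1, by omega⟩).2
      rw [hwdef]; dsimp only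
      rw [hblastσ, Real.log_rpow hp0, h0]
      nlinarith [hL]
    have hS1 : (∑ i ∈ Finset.range (r'+2), ∑ k ∈ Finset.range i, b i / b k)
        = (((r'+2:ℕ):ℝ) - 1 + μ) * μ := by
      rw [← hSsum]
    have hc : 0 < μ*(1+μ) := mul_pos hμ0 (by linarith)
    have hnn : 0 ≤ μ*(1+μ)*(w 0) - μ*(1+μ)*(w (r'+1)) := by
      nlinarith [mul_nonneg hc.le hw0, mul_nonneg hc.le (neg_nonneg.mpr hwlast)]
    rw [hconv]
    linarith [hstep1, hsplit, hT1, hT2, hTT, hS1, hnn]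
end

section
/- Let p be a prime and 3 ≤ r ≤ s integers. Set δ := p^{-(s-1)/(r-1)} and let μ̃ ∈ (0,1) satisfy p^{s-1}·μ̃^{r-1} = (1+μ̃)^{r-3}. Then δ ≤ μ̃ < δ + δ²/(1-δ). -/
theorem mu_bounds (p : ℕ) (hp : p.Prime) (r s : ℕ) (hr : 3 ≤ r) (hrs : r ≤ s)
    (μ : ℝ) (hμ : μ ∈ Set.Ioo (0 : ℝ) 1)
    (hμeq : (p : ℝ) ^ (s - 1) * μ ^ (r - 1) = (1 + μ) ^ (r - 3)) :
    (p : ℝ) ^ (-(((s : ℝ) - 1) / ((r : ℝ) - 1))) ≤ μ ∧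
    μ < (p : ℝ) ^ (-(((s : ℝ) - 1) / ((r : ℝ) - 1))) +
        ((p : ℝ) ^ (-(((s : ℝ) - 1) / ((r : ℝ) - 1)))) ^ 2 /
          (1 - (p : ℝ) ^ (-(((s : ℝ) - 1) / ((r : ℝ) - 1)))) := by
  obtain ⟨hμ0, hμ1⟩ := hμ
  have hp1 : (1:ℝ) < p := by exact_mod_cast hp.one_lt
  have hp0 : (0:ℝ) < p := by linarith
  have hr3 : (3:ℝ) ≤ (r:ℝ) := by exact_mod_cast hr
  have hs3 : (3:ℝ) ≤ (s:ℝ) := by exact_mod_cast (hr.trans hrs)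
  set n := r - 1 with hn
  set m := s - 1 with hm
  have hnr : ((n:ℕ):ℝ) = (r:ℝ) - 1 := by
    rw [hn, Nat.cast_sub (by omega : 1 ≤ r)]; norm_num
  have hms : ((m:ℕ):ℝ) = (s:ℝ) - 1 := by
    rw [hm, Nat.cast_sub (by omega : 1 ≤ s)]; norm_num
  have hn0 : n ≠ 0 := by omega
  set d : ℝ := ((s:ℝ)-1)/((r:ℝ)-1) with hd
  have hd0 : 0 < d := by
    apply div_pos <;> linarith
  set δ : ℝ := (p:ℝ) ^ (-d) with hδdef
  have hδ0 : 0 < δ := Real.rpow_pos_of_pos hp0 _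
  have hδ1 : δ < 1 := Real.rpow_lt_one_of_one_lt_of_neg hp1 (by linarith)
  have hdn : d * (n:ℝ) = (m:ℝ) := by
    rw [hnr, hms, hd, div_mul_cancel₀]
    exact ne_of_gt (by linarith)
  have hδn : δ ^ n = ((p:ℝ)^m)⁻¹ := by
    have h1 : δ ^ n = (p:ℝ) ^ (-(d * (n:ℝ))) := by
      rw [hδdef, ← Real.rpow_natCast ((p:ℝ) ^ (-d)) n, ← Real.rpow_mul hp0.le, neg_mul]
    rw [h1, hdn, Real.rpow_neg hp0.le, Real.rpow_natCast]
  have hpm : (0:ℝ) < (p:ℝ)^m := by positivity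
  -- lower bound
  have hone : (1:ℝ) ≤ (1+μ)^(r-3) := one_le_pow₀ (by linarith)
  have hlow : ((p:ℝ)^m)⁻¹ ≤ μ ^ n := by
    rw [inv_eq_one_div, div_le_iff₀ hpm]
    nlinarith [hμeq]
  have lb : δ ≤ μ := by
    apply le_of_pow_le_pow_left₀ hn0 hμ0.le
    rw [hδn]; exact hlow
  refine ⟨lb, ?_⟩
  -- upper bound
  have hpow : (1+μ)^(r-3) < (1+μ)^n := by
    apply pow_lt_pow_right₀ (by linarith) (by omega)
  have hkey : (δ⁻¹ * μ)^n < (1+μ)^n := by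
    rw [mul_pow, inv_pow, hδn, inv_inv]
    calc (p:ℝ)^m * μ^n = (1+μ)^(r-3) := hμeq
      _ < (1+μ)^n := hpow
  have h2 : δ⁻¹ * μ < 1 + μ := lt_of_pow_lt_pow_left₀ n (by linarith) hkey
  have h3 : μ < δ * (1 + μ) := by
    have := mul_lt_mul_of_pos_left h2 hδ0
    rwa [mul_inv_cancel_left₀ hδ0.ne'] at this
  have hδne : (1:ℝ) - δ ≠ 0 := ne_of_gt (by linarith)
  have heq : δ + δ^2/(1-δ) = δ/(1-δ) := by
    field_simp
    ring
  rw [heq, lt_div_iff₀ (by linarith : (0:ℝ) < 1 - δ)]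
  nlinarith [h3]
end

section
/- Let p be a prime and 3 ≤ r ≤ s integers. Let ν̃ ∈ (0,1) be the unique solution of p^{s-1}·x^{r-1} = (1-x)², and let δ := p^{-(s-1)/(r-1)}. Then δ - δ²/(1+δ) ≤ ν̃ < δ ≤ 1/p. -/
theorem nu_bounds (p : ℕ) (hp : p.Prime) (r s : ℕ) (hr : 3 ≤ r) (hrs : r ≤ s)
    (ν : ℝ) (hν : ν ∈ Set.Ioo (0 : ℝ) 1)
    (hνeq : (p : ℝ) ^ (s - 1) * ν ^ (r - 1) = (1 - ν) ^ 2) :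
    (p : ℝ) ^ (-(((s : ℝ) - 1) / ((r : ℝ) - 1))) -
        ((p : ℝ) ^ (-(((s : ℝ) - 1) / ((r : ℝ) - 1)))) ^ 2 /
          (1 + (p : ℝ) ^ (-(((s : ℝ) - 1) / ((r : ℝ) - 1)))) ≤ ν ∧
    ν < (p : ℝ) ^ (-(((s : ℝ) - 1) / ((r : ℝ) - 1))) ∧
    (p : ℝ) ^ (-(((s : ℝ) - 1) / ((r : ℝ) - 1))) ≤ 1 / (p : ℝ) := by
  obtain ⟨hν0, hν1⟩ := hν
  have hp1 : (1:ℝ) < p := by exact_mod_cast hp.one_lt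
  have hp0 : (0:ℝ) < p := by linarith
  set e : ℝ := -(((s:ℝ)-1)/((r:ℝ)-1)) with he
  set δ : ℝ := (p:ℝ) ^ e with hδ
  have hδ0 : 0 < δ := Real.rpow_pos_of_pos hp0 e
  have hr1 : ((r:ℝ) - 1) = ((r-1 : ℕ) : ℝ) := by
    have h1 : (1:ℕ) ≤ r := by omega
    push_cast [h1]; ring
  have hs1 : ((s:ℝ) - 1) = ((s-1 : ℕ) : ℝ) := by
    have h1 : (1:ℕ) ≤ s := by omega
    push_cast [h1]; ring
  have hr1pos : (0:ℝ) < (r:ℝ) - 1 := by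
    have : (3:ℝ) ≤ r := by exact_mod_cast hr
    linarith
  have hkey : (p:ℝ)^(s-1) * δ^(r-1) = 1 := by
    have hd : δ^(r-1) = (p:ℝ) ^ (e * ((r-1:ℕ):ℝ)) := by
      rw [hδ, ← Real.rpow_natCast ((p:ℝ)^e) (r-1), ← Real.rpow_mul hp0.le]
    have he2 : e * ((r-1:ℕ):ℝ) = -((s:ℝ)-1) := by
      rw [← hr1, he]; field_simp
    rw [hd, he2, hs1, Real.rpow_neg hp0.le, Real.rpow_natCast]
    field_simp
  have hps : (0:ℝ) < (p:ℝ)^(s-1) := pow_pos hp0 _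
  -- ν < δ
  have hνδ : ν < δ := by
    have h1 : (1-ν)^2 < 1 := by nlinarith
    have h2 : (p:ℝ)^(s-1) * ν^(r-1) < (p:ℝ)^(s-1) * δ^(r-1) := by
      rw [hνeq, hkey]; exact h1
    have h3 : ν^(r-1) < δ^(r-1) := lt_of_mul_lt_mul_left h2 hps.le
    exact lt_of_pow_lt_pow_left₀ _ hδ0.le h3
  refine ⟨?_, hνδ, ?_⟩
  · -- lower bound: δ - δ²/(1+δ) = δ/(1+δ) ≤ ν
    have h1δ : (0:ℝ) < 1 + δ := by linarith
    have heq : δ - δ^2/(1+δ) = δ/(1+δ) := by field_simp; ring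
    rw [show (p:ℝ)^e - ((p:ℝ)^e)^2/(1+(p:ℝ)^e) = δ - δ^2/(1+δ) from rfl, heq]
    by_contra hlt
    push_neg at hlt
    set x : ℝ := δ/(1+δ) with hx
    have hx1 : 1 - x = 1/(1+δ) := by rw [hx]; field_simp; ring
    have hxlt1 : x < 1 := by rw [hx]; rw [div_lt_one h1δ]; linarith
    have hrn : 2 ≤ r - 1 := by omega
    have hpow : (1+δ)^2 ≤ (1+δ)^(r-1) := pow_le_pow_right₀ (by linarith) hrn
    -- p^{s-1} x^{r-1} = 1/(1+δ)^{r-1}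
    have hA : (p:ℝ)^(s-1) * x^(r-1) = 1/(1+δ)^(r-1) := by
      rw [hx, div_pow, ← mul_div_assoc, hkey]
    have hB : (1-x)^2 = 1/(1+δ)^2 := by rw [hx1, div_pow, one_pow]
    have hC : (p:ℝ)^(s-1) * x^(r-1) ≤ (1-x)^2 := by
      rw [hA, hB]
      apply div_le_div_of_nonneg_left one_pos.le (by positivity) hpow
    have hD : (p:ℝ)^(s-1) * ν^(r-1) < (p:ℝ)^(s-1) * x^(r-1) := by
      apply mul_lt_mul_of_pos_left _ hps
      exact pow_lt_pow_left₀ hlt hν0.le (by omega)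
    have hE : (1-x)^2 < (1-ν)^2 := by
      exact pow_lt_pow_left₀ (by linarith) (by linarith) two_ne_zero
    linarith [hνeq ▸ hD]
  · -- δ ≤ 1/p
    have hsr : ((r:ℝ) - 1) ≤ (s:ℝ) - 1 := by
      have : (r:ℝ) ≤ s := by exact_mod_cast hrs
      linarith
    have hdiv : (1:ℝ) ≤ ((s:ℝ)-1)/((r:ℝ)-1) := (one_le_div hr1pos).mpr hsr
    have he1 : e ≤ -1 := by rw [he]; linarith
    calc δ ≤ (p:ℝ) ^ (-1:ℝ) := Real.rpow_le_rpow_of_exponent_le hp1.le he1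
      _ = 1 / p := by rw [Real.rpow_neg_one, one_div]
end
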